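/- arXiv:1607.02032 — 2 statements merged into one kernel-verified Lean document; each statement's English description precedes it below -/
import Mathlib

section
/- Let F be a field and let r be an even integer. Then the function [u,v]_r := {u^r,v}, from F^*×F^* to K_2(2,F), is a Steinberg symbol; that is, for all t,u,v∈F^*: [tu,v]_r=[t,v]_r[u,v]_r, [t,uv]_r=[t,u]_r[t,v]_r, and [u,1-u]_r=1 whenever u≠1. -/
/-!
Common definitions: presentations of the abelian groups `K₂(F)`, `K₂(2,F)` and `K₂(A,F)`
(Rehmann–Morita).  "The abelian group generated by symbols subject to relations" is
formalized as the abelianization of the corresponding presented group.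
-/

variable (F : Type) [Field F]

/-- Relators for `K₂(F)`: the Steinberg symbol relations (A1)-(A3).
(A3) `{u, 1-u} = 1` (for `u ≠ 1`) is encoded as: for units `u, w` with `(w : F) = 1 - u`
(which forces `u ≠ 1`), `{u, w}` is a relator. -/
def K2Rels : Set (FreeGroup (Fˣ × Fˣ)) :=
  {r | (∃ t u v : Fˣ, r = FreeGroup.of (t * u, v) * (FreeGroup.of (t, v) * FreeGroup.of (u, v))⁻¹) ∨
       (∃ t u v : Fˣ, r = FreeGroup.of (t, u * v) * (FreeGroup.of (t, u) * FreeGroup.of (t, v))⁻¹) ∨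
       (∃ u w : Fˣ, (w : F) = 1 - (u : F) ∧ r = FreeGroup.of (u, w))}

/-- `K₂(F)`: the abelian group generated by the symbols `{u,v}`, `u v ∈ Fˣ`,
subject to the Steinberg symbol relations (A1)-(A3). -/
def K2 : Type := Abelianization (PresentedGroup (K2Rels F))

noncomputable instance : CommGroup (K2 F) := inferInstanceAs (CommGroup (Abelianization _))

/-- The Steinberg symbol `{u,v}` in `K₂(F)`. -/
def K2.sym (u v : Fˣ) : K2 F := Abelianization.of (PresentedGroup.of (u, v))

/-- The subgroup `m·K₂(F)` of `m`-th powers of elements of `K₂(F)`. -/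
noncomputable def K2.powSubgroup (m : ℕ) : Subgroup (K2 F) := Subgroup.closure {x | ∃ y : K2 F, x = y ^ m}

/-- Relators for `K₂(2,F)`: the Steinberg cocycle relations (B1)-(B4). -/
def K2SLRels : Set (FreeGroup (Fˣ × Fˣ)) :=
  {r | (∃ t u v : Fˣ, r = FreeGroup.of (t, u) * FreeGroup.of (t * u, v) *
          (FreeGroup.of (t, u * v) * FreeGroup.of (u, v))⁻¹) ∨
       (r = FreeGroup.of ((1 : Fˣ), (1 : Fˣ))) ∨
       (∃ u v : Fˣ, r = FreeGroup.of (u, v) * (FreeGroup.of (u⁻¹, v⁻¹))⁻¹) ∨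
       (∃ u v w : Fˣ, (w : F) = 1 - (u : F) ∧
          r = FreeGroup.of (u, v) * (FreeGroup.of (u, w * v))⁻¹)}

/-- `K₂(2,F)`: the abelian group generated by the symbols `{u,v}`, `u v ∈ Fˣ`,
subject to the Steinberg cocycle relations (B1)-(B4). -/
def K2SL : Type := Abelianization (PresentedGroup (K2SLRels F))

noncomputable instance : CommGroup (K2SL F) := inferInstanceAs (CommGroup (Abelianization _))

/-- The Steinberg cocycle `{u,v}` in `K₂(2,F)`. -/
def K2SL.sym (u v : Fˣ) : K2SL F := Abelianization.of (PresentedGroup.of (u, v))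

/-- The subgroup `m⟨{u²,v}⟩` of `K₂(2,F)` generated by the elements `{u²,v}^m`, `u v ∈ Fˣ`. -/
noncomputable def K2SL.sqSubgroup (m : ℤ) : Subgroup (K2SL F) :=
  Subgroup.closure {x | ∃ u v : Fˣ, x = (K2SL.sym F (u ^ 2) v) ^ m}

/-- A generalized Cartan matrix: `a_{ii} = 2`, off-diagonal entries `≤ 0`,
and `a_{ij} = 0 ↔ a_{ji} = 0`. -/
def IsGCM {n : ℕ} (A : Matrix (Fin n) (Fin n) ℤ) : Prop :=
  (∀ i, A i i = 2) ∧ (∀ i j, i ≠ j → A i j ≤ 0) ∧ (∀ i j, A i j = 0 ↔ A j i = 0)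

/-- Relators for `K₂(A,F)`: the Rehmann–Morita relations (L1)-(L7). -/
def K2ARels {n : ℕ} (A : Matrix (Fin n) (Fin n) ℤ) : Set (FreeGroup (Fin n × Fˣ × Fˣ)) :=
  {r | (∃ (i : Fin n) (t u v : Fˣ),
          r = FreeGroup.of (i, t, u) * FreeGroup.of (i, t * u, v) *
              (FreeGroup.of (i, t, u * v) * FreeGroup.of (i, u, v))⁻¹) ∨
       (∃ i : Fin n, r = FreeGroup.of (i, 1, 1)) ∨
       (∃ (i : Fin n) (u v : Fˣ),
          r = FreeGroup.of (i, u, v) * (FreeGroup.of (i, u⁻¹, v⁻¹))⁻¹) ∨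
       (∃ (i : Fin n) (u v w : Fˣ), (w : F) = 1 - (u : F) ∧
          r = FreeGroup.of (i, u, v) * (FreeGroup.of (i, u, w * v))⁻¹) ∨
       (∃ (i j : Fin n) (u v : Fˣ), i ≠ j ∧
          r = FreeGroup.of (i, u, v ^ (A j i)) * (FreeGroup.of (j, u ^ (A i j), v))⁻¹) ∨
       (∃ (i j : Fin n) (t u v : Fˣ), i ≠ j ∧
          r = FreeGroup.of (i, t * u, v ^ (A j i)) *
              (FreeGroup.of (i, t, v ^ (A j i)) * FreeGroup.of (i, u, v ^ (A j i)))⁻¹) ∨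
       (∃ (i j : Fin n) (t u v : Fˣ), i ≠ j ∧
          r = FreeGroup.of (i, t ^ (A j i), u * v) *
              (FreeGroup.of (i, t ^ (A j i), u) * FreeGroup.of (i, t ^ (A j i), v))⁻¹)}

/-- `K₂(A,F)`: the abelian group generated by the symbols `c_i(u,v)` subject to (L1)-(L7). -/
def K2A {n : ℕ} (A : Matrix (Fin n) (Fin n) ℤ) : Type :=
  Abelianization (PresentedGroup (K2ARels F A))

noncomputable instance {n : ℕ} (A : Matrix (Fin n) (Fin n) ℤ) : CommGroup (K2A F A) :=
  inferInstanceAs (CommGroup (Abelianization _))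

/-- The generator `c_i(u,v)` of `K₂(A,F)`. -/
def K2A.c {n : ℕ} (A : Matrix (Fin n) (Fin n) ℤ) (i : Fin n) (u v : Fˣ) : K2A F A :=
  Abelianization.of (PresentedGroup.of (i, u, v))

open scoped Classical in
/-- `LGroup F p` is `K₂(F)` when `p` holds and `K₂(2,F)` otherwise.  Taking
`p = "the i-th column of A has an odd entry"` gives the factor `L_i`. -/
noncomputable def LGroup (p : Prop) : Type :=
  Abelianization (PresentedGroup (if p then K2Rels F else K2SLRels F))

noncomputable instance (p : Prop) : CommGroup (LGroup F p) :=
  inferInstanceAs (CommGroup (Abelianization _))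

/-- The symbol `{u,v}` (Steinberg symbol resp. cocycle) in `LGroup F p`. -/
noncomputable def LGroup.sym (p : Prop) (u v : Fˣ) : LGroup F p :=
  Abelianization.of (PresentedGroup.of (u, v))

/-- Relators `x_i^{a_{ji}} = x_j^{a_{ij}}` (`i < j`) for the auxiliary abelian group `G`. -/
def GRels {n : ℕ} (A : Matrix (Fin n) (Fin n) ℤ) : Set (FreeGroup (Fin n)) :=
  {r | ∃ i j : Fin n, i < j ∧ r = FreeGroup.of i ^ (A j i) * (FreeGroup.of j ^ (A i j))⁻¹}

/-- The abelian group `G = ⟨x_1,…,x_n ∣ x_i^{a_{ji}} = x_j^{a_{ij}}, [x_i,x_j] = 1⟩`. -/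
def GGroup {n : ℕ} (A : Matrix (Fin n) (Fin n) ℤ) : Type :=
  Abelianization (PresentedGroup (GRels A))

noncomputable instance {n : ℕ} (A : Matrix (Fin n) (Fin n) ℤ) : CommGroup (GGroup A) :=
  inferInstanceAs (CommGroup (Abelianization _))

/-! ### Auxiliary development for the proof -/

section SteinbergCocycleAux

private theorem st_lin1 {A : Type} [AddCommGroup A] {x y a b : A} (h : a = b)
    (key : x - y = a - b) : x = y :=
  sub_eq_zero.mp (key.trans (by rw [sub_eq_zero_of_eq h]))

private theorem st_lin3 {A : Type} [AddCommGroup A] {x y a₁ b₁ a₂ b₂ a₃ b₃ : A}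
    (h₁ : a₁ = b₁) (h₂ : a₂ = b₂) (h₃ : a₃ = b₃)
    (key : x - y = a₁ - b₁ + (a₂ - b₂ + (a₃ - b₃))) : x = y :=
  sub_eq_zero.mp (key.trans (by
    rw [sub_eq_zero_of_eq h₁, sub_eq_zero_of_eq h₂, sub_eq_zero_of_eq h₃]; simp))

variable {F₀ : Type} [Field F₀] {A : Type} [AddCommGroup A] {c : F₀ˣ → F₀ˣ → A}

variable (hB1 : ∀ t u v : F₀ˣ, c t u + c (t * u) v = c t (u * v) + c u v)
variable (hB2 : c 1 1 = 0)
variable (hB3 : ∀ u v : F₀ˣ, c u v = c u⁻¹ v⁻¹)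
variable (hB4 : ∀ u v w : F₀ˣ, (w : F₀) = 1 - (u : F₀) → c u v = c u (w * v))

include hB1 hB2 hB3 hB4

private theorem st_one_left (v : F₀ˣ) : c 1 v = 0 := by
  have h := hB1 1 1 v
  simp only [one_mul] at h
  have h2 : c 1 1 = c 1 v := add_right_cancel h
  rw [← h2]; exact hB2

private theorem st_one_right (t : F₀ˣ) : c t 1 = 0 := by
  have h := hB1 t 1 1
  simp only [mul_one, one_mul] at h
  have h2 : c t 1 = c 1 1 := add_left_cancel h
  rw [h2]; exact hB2

private theorem st_neg (u v : F₀ˣ) : c u v = c u (-u * v) := by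
  by_cases hu : (u : F₀) = 1
  · have h1 : u = 1 := Units.val_eq_one.mp hu
    subst h1
    rw [st_one_left hB1 hB2 hB3 hB4, st_one_left hB1 hB2 hB3 hB4]
  · have hu0 : (u : F₀) ≠ 0 := Units.ne_zero u
    have hne : (1 : F₀) - (u : F₀) ≠ 0 := sub_ne_zero.mpr (Ne.symm hu)
    have hval : (1 : F₀) - ((u : F₀))⁻¹ = ((u : F₀) - 1) * ((u : F₀))⁻¹ := by
      field_simp
    have hne' : (1 : F₀) - ((u : F₀))⁻¹ ≠ 0 := by
      rw [hval]
      exact mul_ne_zero (sub_ne_zero.mpr hu) (inv_ne_zero hu0)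
    set w : F₀ˣ := Units.mk0 _ hne with hw
    set w' : F₀ˣ := Units.mk0 _ hne' with hw'
    have h9 : (u : F₀) - 1 ≠ 0 := sub_ne_zero.mpr hu
    have hww : w * w'⁻¹ = -u := by
      apply Units.ext
      rw [Units.val_mul, Units.val_inv_eq_inv_val]
      rw [hw, hw', Units.val_mk0, Units.val_mk0, Units.val_neg]
      rw [hval, mul_inv_rev, inv_inv]
      rw [show (1 : F₀) - (u : F₀) = -((u : F₀) - 1) from by ring, neg_mul, neg_inj,
        mul_comm ((u : F₀)) (((u : F₀) - 1)⁻¹), mul_inv_cancel_left₀ h9]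
    calc c u v = c u⁻¹ v⁻¹ := hB3 u v
      _ = c u⁻¹ (w' * v⁻¹) := hB4 u⁻¹ v⁻¹ w'
            (by rw [hw', Units.val_mk0, Units.val_inv_eq_inv_val])
      _ = c (u⁻¹)⁻¹ (w' * v⁻¹)⁻¹ := hB3 u⁻¹ (w' * v⁻¹)
      _ = c u (w'⁻¹ * v) := by rw [inv_inv, mul_inv, inv_inv]
      _ = c u (w * (w'⁻¹ * v)) := hB4 u (w'⁻¹ * v) w (by rw [hw, Units.val_mk0])
      _ = c u (-u * v) := by rw [← mul_assoc, hww]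

private theorem st_sq (u v : F₀ˣ) : c u v = c u (u ^ 2 * v) := by
  have h1 := st_neg hB1 hB2 hB3 hB4 u v
  have h2 := st_neg hB1 hB2 hB3 hB4 u (-u * v)
  rw [show -u * (-u * v) = u ^ 2 * v from Units.ext (by
    simp only [Units.val_mul, Units.val_neg, Units.val_pow_eq_pow_val]; ring)] at h2
  exact h1.trans h2

private theorem st_neg_self (u : F₀ˣ) : c u (-u) = 0 := by
  have h := st_neg hB1 hB2 hB3 hB4 u 1
  rw [mul_one] at h
  rw [← h]
  exact st_one_right hB1 hB2 hB3 hB4 u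

private theorem st_inv_self (u : F₀ˣ) : c u u⁻¹ = c u u := by
  have h := st_sq hB1 hB2 hB3 hB4 u u⁻¹
  rw [show u ^ 2 * u⁻¹ = u from by group] at h
  exact h

private theorem st_neg_one (u : F₀ˣ) : c u (-1) = c u u := by
  have h := st_neg hB1 hB2 hB3 hB4 u (-1)
  rw [show -u * (-1) = u from by rw [neg_mul_neg, mul_one]] at h
  exact h

private theorem st_h_inv (u : F₀ˣ) : c u⁻¹ u⁻¹ = c u u := (hB3 u u).symm

private theorem st_inv_absorb (v y : F₀ˣ) : c v (v⁻¹ * y) = c v (-y) := by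
  have h := st_neg hB1 hB2 hB3 hB4 v (v⁻¹ * y)
  rw [show -v * (v⁻¹ * y) = -y from by rw [neg_mul, mul_inv_cancel_left]] at h
  exact h

private theorem st_e7 (a b : F₀ˣ) : c a b = c a a - c a⁻¹ (a * b) := by
  have h := hB1 a⁻¹ a b
  rw [inv_mul_cancel, st_one_left hB1 hB2 hB3 hB4, add_zero] at h
  have h2 : c a⁻¹ a = c a a := by
    have h3 := st_inv_self hB1 hB2 hB3 hB4 a⁻¹
    rw [inv_inv] at h3
    rw [h3, st_h_inv hB1 hB2 hB3 hB4]
  rw [h2] at h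
  exact st_lin1 h.symm (by abel)

private theorem st_e4 (u v : F₀ˣ) :
    c u v = c u u - c (u * v) (u * v) + c v (-u⁻¹) := by
  have h := hB1 u v (u * v)⁻¹
  rw [st_inv_self hB1 hB2 hB3 hB4 (u * v)] at h
  rw [show v * (u * v)⁻¹ = u⁻¹ from by group] at h
  rw [st_inv_self hB1 hB2 hB3 hB4 u] at h
  rw [show (u * v)⁻¹ = v⁻¹ * u⁻¹ from by group] at h
  rw [st_inv_absorb hB1 hB2 hB3 hB4 v u⁻¹] at h
  exact st_lin1 h (by abel)

private theorem st_e1 (u t : F₀ˣ) :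
    c (u ^ 2) t = c u (u * t) + c u t - c u u := by
  have h := hB1 u u t
  rw [← pow_two] at h
  exact st_lin1 h (by abel)

private theorem st_h1 (t u : F₀ˣ) :
    c (t * u) (t * u) = c t (-u) - c t u + c u u := by
  have h := hB1 t u (-1)
  rw [mul_neg_one, st_neg_one hB1 hB2 hB3 hB4 (t * u), st_neg_one hB1 hB2 hB3 hB4 u] at h
  exact st_lin1 h (by abel)

private theorem st_sqneg (u v : F₀ˣ) : c (u ^ 2) (-v) = c (u ^ 2) v := by
  have e1a := st_e1 hB1 hB2 hB3 hB4 u (-v)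
  have e1b := st_e1 hB1 hB2 hB3 hB4 u v
  have h2 : c u (u * -v) = c u v := by
    rw [show u * -v = -u * v from by rw [neg_mul, mul_neg]]
    exact (st_neg hB1 hB2 hB3 hB4 u v).symm
  have h3 : c u (-v) = c u (u * v) := by
    have h := st_neg hB1 hB2 hB3 hB4 u (-v)
    rw [show -u * -v = u * v from by rw [neg_mul_neg]] at h
    exact h
  rw [e1a, e1b, h2, h3]
  abel

private theorem st_hsqmul (u v : F₀ˣ) : c (u ^ 2 * v) (u ^ 2 * v) = c v v := by
  rw [st_h1 hB1 hB2 hB3 hB4 (u ^ 2) v, st_sqneg hB1 hB2 hB3 hB4 u v]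
  abel

private theorem st_sk (u v : F₀ˣ) : c u v = c v u⁻¹ := by
  have e4 := st_e4 hB1 hB2 hB3 hB4 u v
  have h16 := st_h1 hB1 hB2 hB3 hB4 v u⁻¹
  have h17 := st_hsqmul hB1 hB2 hB3 hB4 u (v * u⁻¹)
  rw [show u ^ 2 * (v * u⁻¹) = u * v from by
    rw [mul_comm v u⁻¹, pow_two, mul_assoc, mul_inv_cancel_left]] at h17
  rw [st_h_inv hB1 hB2 hB3 hB4 u] at h16
  rw [← h17] at h16
  have hx : c v (-u⁻¹) = c (u * v) (u * v) + c v u⁻¹ - c u u := by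
    rw [h16]; abel
  rw [e4, hx]; abel

private theorem st_i1 (u v : F₀ˣ) : c (u ^ 2) v = c u v - c v u := by
  have e1 := st_e1 hB1 hB2 hB3 hB4 u v
  have e7 := st_e7 hB1 hB2 hB3 hB4 u (u * v)
  have hx : c u⁻¹ (u * (u * v)) = c v u := by
    rw [hB3 u⁻¹ (u * (u * v)), inv_inv]
    rw [st_sq hB1 hB2 hB3 hB4 u ((u * (u * v))⁻¹)]
    rw [show u ^ 2 * (u * (u * v))⁻¹ = v⁻¹ from Units.ext (by
      have hu := u.ne_zero
      have hv := v.ne_zero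
      push_cast
      field_simp
      try ring)]
    rw [st_sk hB1 hB2 hB3 hB4 u v⁻¹]
    exact (hB3 v u).symm
  rw [e1, e7, hx]; abel

private theorem st_br_left (u v w : F₀ˣ) :
    c (u * v) w - c w (u * v) = c u w - c w u + (c v w - c w v) := by
  have h1 := hB1 u v w
  rw [mul_comm v w] at h1
  have h2 := hB1 w u v
  rw [mul_comm w u] at h2
  have h3 := hB1 u w v
  exact st_lin3 h1 h2 h3.symm (by abel)

private theorem st_br_right (u v w : F₀ˣ) :
    c u (v * w) - c (v * w) u = c u v - c v u + (c u w - c w u) := by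
  have h := st_br_left hB1 hB2 hB3 hB4 v w u
  exact st_lin1 h.symm (by abel)

private theorem st_br_zpow (k : ℤ) (u v : F₀ˣ) :
    c (u ^ k) v - c v (u ^ k) = k • (c u v - c v u) := by
  have h := map_zpow (MonoidHom.mk' (fun x => Multiplicative.ofAdd (c x v - c v x))
      (fun a b => by
        rw [← ofAdd_add]
        exact congrArg Multiplicative.ofAdd (st_br_left hB1 hB2 hB3 hB4 a b v))) u k
  have h2 : Multiplicative.ofAdd (c (u ^ k) v - c v (u ^ k)) =
      Multiplicative.ofAdd (c u v - c v u) ^ k := h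
  rw [← ofAdd_zsmul] at h2
  exact Multiplicative.ofAdd.injective h2

private theorem st_even (k : ℤ) (t v : F₀ˣ) :
    c (t ^ (k + k)) v = k • (c t v - c v t) := by
  rw [show t ^ (k + k) = (t ^ k) ^ 2 from by rw [zpow_add, ← pow_two]]
  rw [st_i1 hB1 hB2 hB3 hB4 (t ^ k) v]
  exact st_br_zpow hB1 hB2 hB3 hB4 k t v

private theorem st_goal1 (k : ℤ) (t u v : F₀ˣ) :
    c ((t * u) ^ (k + k)) v = c (t ^ (k + k)) v + c (u ^ (k + k)) v := by
  rw [st_even hB1 hB2 hB3 hB4, st_even hB1 hB2 hB3 hB4, st_even hB1 hB2 hB3 hB4]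
  rw [show c (t * u) v - c v (t * u) = c t v - c v t + (c u v - c v u) from
    st_br_left hB1 hB2 hB3 hB4 t u v, smul_add]

private theorem st_goal2 (k : ℤ) (t u v : F₀ˣ) :
    c (t ^ (k + k)) (u * v) = c (t ^ (k + k)) u + c (t ^ (k + k)) v := by
  rw [st_even hB1 hB2 hB3 hB4, st_even hB1 hB2 hB3 hB4, st_even hB1 hB2 hB3 hB4]
  rw [show c t (u * v) - c (u * v) t = c t u - c u t + (c t v - c v t) from
    st_br_right hB1 hB2 hB3 hB4 t u v, smul_add]

private theorem st_goal3 (k : ℤ) (u w : F₀ˣ) (hw : (w : F₀) = 1 - (u : F₀)) :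
    c (u ^ (k + k)) w = 0 := by
  rw [st_even hB1 hB2 hB3 hB4]
  have hcw : c u w = 0 := by
    have h := hB4 u 1 w hw
    rw [mul_one] at h
    rw [← h]
    exact st_one_right hB1 hB2 hB3 hB4 u
  have hwc : c w u = 0 := by
    rw [st_sk hB1 hB2 hB3 hB4 w u]
    have h := hB4 u w⁻¹ w hw
    rw [mul_inv_cancel] at h
    rw [h]
    exact st_one_right hB1 hB2 hB3 hB4 u
  rw [hcw, hwc, sub_zero, smul_zero]

end SteinbergCocycleAux

section K2SLInstantiation

private def K2SLpi (F : Type) [Field F] : FreeGroup (Fˣ × Fˣ) →* K2SL F :=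
  (Abelianization.of (G := PresentedGroup (K2SLRels F))).comp (PresentedGroup.mk (K2SLRels F))

private theorem K2SLpi_rel {F : Type} [Field F] {r : FreeGroup (Fˣ × Fˣ)}
    (h : r ∈ K2SLRels F) : K2SLpi F r = 1 := by
  have h1 : PresentedGroup.mk (K2SLRels F) r = 1 :=
    (QuotientGroup.eq_one_iff r).mpr (Subgroup.subset_normalClosure h)
  show Abelianization.of (PresentedGroup.mk (K2SLRels F) r) = 1
  rw [h1, map_one]

private theorem K2SL.relB1 (F : Type) [Field F] (t u v : Fˣ) :
    K2SL.sym F t u * K2SL.sym F (t * u) v = K2SL.sym F t (u * v) * K2SL.sym F u v := by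
  have hmem : (FreeGroup.of (t, u) * FreeGroup.of (t * u, v) *
      (FreeGroup.of (t, u * v) * FreeGroup.of (u, v))⁻¹) ∈ K2SLRels F :=
    Or.inl ⟨t, u, v, rfl⟩
  have h := K2SLpi_rel hmem
  simp only [map_mul, map_inv] at h
  rw [mul_inv_eq_one] at h
  exact h

private theorem K2SL.relB2 (F : Type) [Field F] : K2SL.sym F 1 1 = 1 := by
  have hmem : (FreeGroup.of ((1 : Fˣ), (1 : Fˣ))) ∈ K2SLRels F := Or.inr (Or.inl rfl)
  exact K2SLpi_rel hmem

private theorem K2SL.relB3 (F : Type) [Field F] (u v : Fˣ) :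
    K2SL.sym F u v = K2SL.sym F u⁻¹ v⁻¹ := by
  have hmem : (FreeGroup.of (u, v) * (FreeGroup.of (u⁻¹, v⁻¹))⁻¹) ∈ K2SLRels F :=
    Or.inr (Or.inr (Or.inl ⟨u, v, rfl⟩))
  have h := K2SLpi_rel hmem
  simp only [map_mul, map_inv] at h
  rw [mul_inv_eq_one] at h
  exact h

private theorem K2SL.relB4 (F : Type) [Field F] (u v w : Fˣ) (hw : (w : F) = 1 - (u : F)) :
    K2SL.sym F u v = K2SL.sym F u (w * v) := by
  have hmem : (FreeGroup.of (u, v) * (FreeGroup.of (u, w * v))⁻¹) ∈ K2SLRels F :=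
    Or.inr (Or.inr (Or.inr ⟨u, v, w, hw, rfl⟩))
  have h := K2SLpi_rel hmem
  simp only [map_mul, map_inv] at h
  rw [mul_inv_eq_one] at h
  exact h

end K2SLInstantiation

/-- For an even integer `r`, the map `[u,v]_r := {u^r, v}` from `Fˣ × Fˣ` to `K₂(2,F)`
is a Steinberg symbol: it is bimultiplicative and `[u, 1-u]_r = 1` whenever `u ≠ 1`
(encoded: `[u, w]_r = 1` whenever `w` is a unit with `(w : F) = 1 - u`). -/
theorem K2SL.pow_steinberg_symbol (F : Type) [Field F] (r : ℤ) (hr : Even r) :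
    (∀ t u v : Fˣ,
      K2SL.sym F ((t * u) ^ r) v = K2SL.sym F (t ^ r) v * K2SL.sym F (u ^ r) v) ∧
    (∀ t u v : Fˣ,
      K2SL.sym F (t ^ r) (u * v) = K2SL.sym F (t ^ r) u * K2SL.sym F (t ^ r) v) ∧
    (∀ u w : Fˣ, (w : F) = 1 - (u : F) → K2SL.sym F (u ^ r) w = 1) := by
  obtain ⟨k, hk⟩ := hr
  subst hk
  set c : Fˣ → Fˣ → Additive (K2SL F) := fun a b => Additive.ofMul (K2SL.sym F a b) with hc
  have hB1 : ∀ t u v : Fˣ, c t u + c (t * u) v = c t (u * v) + c u v := fun t u v =>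
    congrArg Additive.ofMul (K2SL.relB1 F t u v)
  have hB2 : c 1 1 = 0 := congrArg Additive.ofMul (K2SL.relB2 F)
  have hB3 : ∀ u v : Fˣ, c u v = c u⁻¹ v⁻¹ := fun u v =>
    congrArg Additive.ofMul (K2SL.relB3 F u v)
  have hB4 : ∀ u v w : Fˣ, (w : F) = 1 - (u : F) → c u v = c u (w * v) := fun u v w hw =>
    congrArg Additive.ofMul (K2SL.relB4 F u v w hw)
  refine ⟨fun t u v => ?_, fun t u v => ?_, fun u w hw => ?_⟩
  · exact Additive.ofMul.injective (st_goal1 hB1 hB2 hB3 hB4 k t u v)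
  · exact Additive.ofMul.injective (st_goal2 hB1 hB2 hB3 hB4 k t u v)
  · exact Additive.ofMul.injective (st_goal3 hB1 hB2 hB3 hB4 k u w hw)
end

section
/- Let a,b be positive odd integers, let A be the 2×2 generalized Cartan matrix with rows (2,−b) and (−a,2), let F be a field, and let h=gcd(a,b). Then K_2(A,F) is isomorphic to (K_2(F)/hK_2(F)) × K_2(F). -/
/-!
Common definitions: presentations of the abelian groups `K₂(F)`, `K₂(2,F)` and `K₂(A,F)`
(Rehmann–Morita).  "The abelian group generated by symbols subject to relations" is
formalized as the abelianization of the corresponding presented group.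
-/

variable (F : Type) [Field F]

/-! ### Auxiliary machinery for the proof -/

section SCsection
variable {F : Type} [Field F]

variable {M : Type} [CommGroup M]

/-- A Steinberg cocycle on `Fˣ` with values in a commutative group. -/
structure SC (F : Type) [Field F] (M : Type) [CommGroup M] where
  c : Fˣ → Fˣ → M
  hc : ∀ t u v, c t u * c (t*u) v = c t (u*v) * c u v
  hone : c 1 1 = 1
  hinv : ∀ u v, c u v = c u⁻¹ v⁻¹
  hst : ∀ (u w v : Fˣ), (w : F) = 1 - (u : F) → c u v = c u (w * v)

namespace SC

variable (s : SC F M)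

theorem key (t v : Fˣ) : s.c t 1 = s.c 1 v := by
  have h := s.hc t 1 v
  rw [mul_one, one_mul] at h
  exact mul_right_cancel (by rw [h, mul_comm])

theorem one_left (v : Fˣ) : s.c 1 v = 1 := by rw [← s.key 1 v, s.key 1 1, s.hone]

theorem one_right (t : Fˣ) : s.c t 1 = 1 := by rw [s.key t 1, s.one_left]

/-- `c u (1-u) = 1`. -/
theorem steinberg (u w : Fˣ) (h : (w : F) = 1 - (u : F)) : s.c u w = 1 := by
  have := s.hst u w 1 h
  rw [mul_one, s.one_right] at this
  exact this.symm

/-- M_b : `c u v = c u (-u * v)`. -/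
theorem mb (u v : Fˣ) : s.c u v = s.c u (-u * v) := by
  by_cases hu : u = 1
  · subst hu
    rw [s.one_left, s.one_left]
  · have hu' : (u : F) ≠ 1 := fun h => hu (Units.ext h)
    have h1u : (1 : F) - u ≠ 0 := sub_ne_zero.2 (Ne.symm hu')
    have hui : ((u⁻¹ : Fˣ) : F) ≠ 1 := by
      rw [Units.val_inv_eq_inv_val]
      intro h
      apply hu'
      have := congrArg (fun x : F => x⁻¹) h
      simpa using this
    have h1ui : (1 : F) - (u⁻¹ : Fˣ) ≠ 0 := sub_ne_zero.2 (Ne.symm hui)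
    set w : Fˣ := Units.mk0 _ h1u with hw
    set w' : Fˣ := Units.mk0 _ h1ui with hw'
    have step1 : s.c u v = s.c u (w'⁻¹ * v) := by
      have e1 : s.c u v = s.c u⁻¹ v⁻¹ := s.hinv u v
      have e2 : s.c u⁻¹ v⁻¹ = s.c u⁻¹ (w' * v⁻¹) := s.hst u⁻¹ w' v⁻¹ rfl
      have e3 : s.c u⁻¹ (w' * v⁻¹) = s.c u ((w' * v⁻¹)⁻¹) := by
        rw [s.hinv u⁻¹ (w' * v⁻¹), inv_inv]
      rw [e1, e2, e3, mul_inv, inv_inv]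
    have step2 : s.c u (w'⁻¹ * v) = s.c u (w * (w'⁻¹ * v)) := s.hst u w _ rfl
    have hww : w = -u * w' := by
      ext
      rw [hw, hw']
      push_cast [Units.val_inv_eq_inv_val]
      simp only [Units.val_mk0]
      field_simp
      ring
    have hmul : w * (w'⁻¹ * v) = -u * v := by rw [hww]; group
    rw [step1, step2, hmul]

theorem neg_self (u : Fˣ) : s.c u (-u) = 1 := by
  have := s.mb u 1
  rw [mul_one, s.one_right] at this
  exact this.symm

theorem neg_inv_self (u : Fˣ) : s.c u (-u⁻¹) = 1 := by
  have := s.mb u (-u⁻¹)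
  have h : -u * -u⁻¹ = 1 := by rw [neg_mul_neg, mul_inv_cancel]
  rw [h, s.one_right] at this
  exact this

/-- swap: `c u v = c v u⁻¹`. -/
theorem swap (u v : Fˣ) : s.c u v = s.c v u⁻¹ := by
  have h := s.hc u v (-(u*v)⁻¹)
  have e1 : v * -(u*v)⁻¹ = -u⁻¹ := by
    rw [mul_neg, mul_inv_rev, mul_inv_cancel_left]
  rw [s.neg_inv_self (u*v), mul_one, e1, s.neg_inv_self u, one_mul] at h
  have h2 := s.mb v (-(u*v)⁻¹)
  have e2 : -v * -(u*v)⁻¹ = u⁻¹ := by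
    rw [neg_mul_neg, mul_inv_rev, mul_inv_cancel_left]
  rw [e2] at h2
  exact h.trans h2

/-- M_e : `c t (-v) * c v t = c t (-1)`. -/
theorem me (t v : Fˣ) : s.c t (-v) * s.c v t = s.c t (-1) := by
  have h := s.hc t (-v) v⁻¹
  have e1 : (-v : Fˣ) * v⁻¹ = -1 := by rw [neg_mul, mul_inv_cancel]
  have e2 : s.c (-v) v⁻¹ = 1 := by
    have := s.neg_inv_self (-v)
    rwa [inv_neg, neg_neg] at this
  rw [e1, e2, mul_one] at h
  -- h : c t (-v) * c (t * -v) v⁻¹ = c t (-1)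
  have h3 : s.c (t * -v) v⁻¹ = s.c v t := by
    rw [s.swap (t * -v) v⁻¹]
    have e3 : (t * -v)⁻¹ = -v⁻¹ * t⁻¹ := by rw [mul_inv_rev, inv_neg, neg_mul]
    rw [e3]
    have h4 := s.mb v⁻¹ t⁻¹
    have e4 : -v⁻¹ * t⁻¹ = -v⁻¹ * t⁻¹ := rfl
    rw [← h4]
    · rw [s.hinv v⁻¹ t⁻¹, inv_inv, inv_inv]
  rw [h3] at h
  exact h

/-- `c t t = c t (-1)`. -/
theorem self_eq (t : Fˣ) : s.c t t = s.c t (-1) := by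
  have := s.mb t (-1)
  rw [mul_neg_one, neg_neg] at this
  exact this.symm

/-- `c (t*t) v = c t v * (c v t)⁻¹`  (the square is the commutator pairing β). -/
theorem sq_left (t v : Fˣ) : s.c (t*t) v = s.c t v * (s.c v t)⁻¹ := by
  have h := s.hc t t v
  have e1 : s.c t (t * v) = s.c t (-v) := by
    have := s.mb t (-v)
    rw [neg_mul_neg] at this
    exact this.symm
  rw [e1, s.self_eq t] at h
  have e2 : s.c t (-v) = s.c t (-1) * (s.c v t)⁻¹ := eq_mul_inv_of_mul_eq (s.me t v)
  rw [e2] at h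
  refine mul_left_cancel (a := s.c t (-1)) (h.trans ?_)
  rw [mul_assoc, mul_comm ((s.c v t)⁻¹)]

/-- The commutator pairing. -/
def beta (x y : Fˣ) : M := s.c x y * (s.c y x)⁻¹

theorem beta_mul_left (t u v : Fˣ) :
    s.beta (t*u) v = s.beta t v * s.beta u v := by
  have f1 : s.c (t*u) v = (s.c t u)⁻¹ * (s.c t (u*v) * s.c u v) := by
    rw [eq_inv_mul_iff_mul_eq]; exact s.hc t u v
  have f2 : s.c v (t*u) = (s.c t u)⁻¹ * (s.c v t * s.c (v*t) u) := by
    rw [eq_inv_mul_iff_mul_eq, mul_comm (s.c t u)]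
    exact (s.hc v t u).symm
  have f3 : s.c (t*v) u = (s.c t v)⁻¹ * (s.c t (v*u) * s.c v u) := by
    rw [eq_inv_mul_iff_mul_eq]; exact s.hc t v u
  unfold beta
  rw [f1, f2, mul_comm v t, f3, mul_comm v u]
  simp only [mul_inv, inv_inv, mul_assoc, mul_comm, mul_left_comm,
    mul_inv_cancel_left, inv_mul_cancel_left, mul_inv_cancel, inv_mul_cancel, one_mul, mul_one]

theorem beta_mul_right (v x y : Fˣ) :
    s.beta v (x*y) = s.beta v x * s.beta v y := by
  have anti : ∀ p q : Fˣ, s.beta p q = (s.beta q p)⁻¹ := by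
    intro p q; unfold beta; rw [mul_inv, inv_inv, mul_comm]
  rw [anti v (x*y), s.beta_mul_left, mul_inv, ← anti v x, ← anti v y]

theorem sq_second (x v : Fˣ) : s.c x (v*v) = s.beta v x⁻¹ := by
  rw [s.swap x (v*v), s.sq_left v x⁻¹]
  rfl

theorem crux (x y v : Fˣ) : s.c (x*y) (v*v) = s.c x (v*v) * s.c y (v*v) := by
  rw [s.sq_second, s.sq_second, s.sq_second, mul_inv]
  exact s.beta_mul_right v x⁻¹ y⁻¹

theorem second_split (w : Fˣ) (hw : ∀ x y : Fˣ, s.c (x*y) w = s.c x w * s.c y w)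
    (t x : Fˣ) : s.c t (x*w) = s.c t x * s.c t w := by
  have h := s.hc t x w
  rw [hw t x, ← mul_assoc] at h
  exact (mul_right_cancel h).symm

variable {k : ℤ}

theorem mul_right (hk : Odd k)
    (h6 : ∀ x y v : Fˣ, s.c (x*y) (v^k) = s.c x (v^k) * s.c y (v^k))
    (t u v : Fˣ) : s.c t (u*v) = s.c t u * s.c t v := by
  obtain ⟨m, hm⟩ := hk
  set z : Fˣ := v ^ (-m) with hzdef
  have hz : z * z * v ^ k = v := by
    rw [hzdef, ← zpow_add, ← zpow_add]
    have : -m + -m + k = 1 := by omega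
    rw [this, zpow_one]
  have huv : u * v = u * (z*z) * v ^ k := by
    rw [mul_assoc, hz]
  rw [huv]
  rw [s.second_split (v^k) (fun x y => h6 x y v) t (u * (z*z))]
  rw [s.second_split (z*z) (fun x y => s.crux x y z) t u]
  rw [mul_assoc, ← s.second_split (v^k) (fun x y => h6 x y v) t (z*z), hz]

theorem mul_left (hk : Odd k)
    (h6 : ∀ x y v : Fˣ, s.c (x*y) (v^k) = s.c x (v^k) * s.c y (v^k))
    (t u v : Fˣ) : s.c (t*u) v = s.c t v * s.c u v := by
  have h := s.hc t u v
  rw [s.mul_right hk h6 t u v] at h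
  have : s.c t u * (s.c t v * s.c u v) = s.c t u * s.c (t*u) v := by
    rw [h, mul_assoc]
  exact (mul_left_cancel this).symm

end SC

/-- power lemmas for bimultiplicative maps -/
theorem zpow_left_of_mul {f : Fˣ → Fˣ → M} (hm : ∀ t u v : Fˣ, f (t*u) v = f t v * f u v)
    (u v : Fˣ) (n : ℤ) : f (u^n) v = (f u v)^n :=
  (MonoidHom.mk' (fun x => f x v) (fun a b => hm a b v)).map_zpow u n

theorem zpow_right_of_mul {f : Fˣ → Fˣ → M} (hm : ∀ t u v : Fˣ, f t (u*v) = f t u * f t v)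
    (u v : Fˣ) (n : ℤ) : f u (v^n) = (f u v)^n :=
  (MonoidHom.mk' (fun x => f u x) (fun a b => hm u a b)).map_zpow v n

end SCsection

section PresAbel

variable {α : Type*} {rels : Set (FreeGroup α)} {N : Type*} [CommGroup N]

/-- The canonical map from the free group to the abelianized presented group. -/
def presAbelHom (rels : Set (FreeGroup α)) :
    FreeGroup α →* Abelianization (PresentedGroup rels) :=
  (Abelianization.of).comp (PresentedGroup.mk rels)

theorem presAbelHom_rel {r : FreeGroup α} (h : r ∈ rels) : presAbelHom rels r = 1 := by
  have h1 : PresentedGroup.mk rels r = 1 :=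
    (QuotientGroup.eq_one_iff r).mpr (Subgroup.subset_normalClosure h)
  show Abelianization.of (PresentedGroup.mk rels r) = 1
  rw [h1, map_one]

theorem presAbel_hom_ext {φ ψ : Abelianization (PresentedGroup rels) →* N}
    (h : ∀ x, φ (Abelianization.of (PresentedGroup.of x)) =
      ψ (Abelianization.of (PresentedGroup.of x))) : φ = ψ :=
  Abelianization.hom_ext _ _ (PresentedGroup.ext h)

/-- Lift a function on generators to the abelianized presented group. -/
noncomputable def presAbelLift (f : α → N) (h : ∀ r ∈ rels, FreeGroup.lift f r = 1) :
    Abelianization (PresentedGroup rels) →* N :=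
  Abelianization.lift (PresentedGroup.toGroup h)

@[simp] theorem presAbelLift_of (f : α → N) (h : ∀ r ∈ rels, FreeGroup.lift f r = 1) (x : α) :
    presAbelLift f h (Abelianization.of (PresentedGroup.of x)) = f x := by
  show Abelianization.lift (PresentedGroup.toGroup h) (Abelianization.of (PresentedGroup.of x)) = f x
  rw [Abelianization.lift_apply_of, PresentedGroup.toGroup.of]

end PresAbel

section SymAPI

theorem sym_def (u v : Fˣ) :
    K2.sym F u v = presAbelHom (K2Rels F) (FreeGroup.of (u, v)) := rfl

theorem sym_mul_left (t u v : Fˣ) :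
    K2.sym F (t*u) v = K2.sym F t v * K2.sym F u v := by
  have h := presAbelHom_rel (rels := K2Rels F) (Or.inl ⟨t, u, v, rfl⟩)
  rw [map_mul, map_inv, mul_inv_eq_one, map_mul] at h
  exact h

theorem sym_mul_right (t u v : Fˣ) :
    K2.sym F t (u*v) = K2.sym F t u * K2.sym F t v := by
  have h := presAbelHom_rel (rels := K2Rels F) (Or.inr (Or.inl ⟨t, u, v, rfl⟩))
  rw [map_mul, map_inv, mul_inv_eq_one, map_mul] at h
  exact h

theorem sym_st (u w : Fˣ) (h : (w : F) = 1 - (u : F)) : K2.sym F u w = 1 :=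
  presAbelHom_rel (rels := K2Rels F) (Or.inr (Or.inr ⟨u, w, h, rfl⟩))

theorem sym_one_left (v : Fˣ) : K2.sym F 1 v = 1 := by
  have h := sym_mul_left F 1 1 v
  rw [mul_one] at h
  exact mul_eq_right.mp h.symm

theorem sym_one_right (u : Fˣ) : K2.sym F u 1 = 1 := by
  have h := sym_mul_right F u 1 1
  rw [mul_one] at h
  exact mul_eq_right.mp h.symm

theorem sym_inv_left (u v : Fˣ) : K2.sym F u⁻¹ v = (K2.sym F u v)⁻¹ := by
  have h := sym_mul_left F u⁻¹ u v
  rw [inv_mul_cancel, sym_one_left] at h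
  exact eq_inv_of_mul_eq_one_left h.symm

theorem sym_inv_right (u v : Fˣ) : K2.sym F u v⁻¹ = (K2.sym F u v)⁻¹ := by
  have h := sym_mul_right F u v⁻¹ v
  rw [inv_mul_cancel, sym_one_right] at h
  exact eq_inv_of_mul_eq_one_left h.symm

theorem sym_inv_inv (u v : Fˣ) : K2.sym F u v = K2.sym F u⁻¹ v⁻¹ := by
  rw [sym_inv_left, sym_inv_right, inv_inv]

theorem sym_zpow_left (u v : Fˣ) (n : ℤ) : K2.sym F (u^n) v = (K2.sym F u v)^n :=
  zpow_left_of_mul (fun t u' v' => sym_mul_left F t u' v') u v n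

theorem sym_zpow_right (u v : Fˣ) (n : ℤ) : K2.sym F u (v^n) = (K2.sym F u v)^n :=
  zpow_right_of_mul (fun t u' v' => sym_mul_right F t u' v') u v n

theorem sym_cocycle (t u v : Fˣ) :
    K2.sym F t u * K2.sym F (t*u) v = K2.sym F t (u*v) * K2.sym F u v := by
  rw [sym_mul_left, sym_mul_right, mul_assoc]

end SymAPI


section CAPI

variable {n : ℕ}

theorem c_def (A : Matrix (Fin n) (Fin n) ℤ) (i : Fin n) (u v : Fˣ) :
    K2A.c F A i u v = presAbelHom (K2ARels F A) (FreeGroup.of (i, u, v)) := rfl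

theorem cL1 (A : Matrix (Fin n) (Fin n) ℤ) (i : Fin n) (t u v : Fˣ) :
    K2A.c F A i t u * K2A.c F A i (t*u) v = K2A.c F A i t (u*v) * K2A.c F A i u v := by
  have h := presAbelHom_rel (rels := K2ARels F A) (Or.inl ⟨i, t, u, v, rfl⟩)
  rw [map_mul, map_mul, map_inv, map_mul, mul_inv_eq_one] at h
  exact h

theorem cL2 (A : Matrix (Fin n) (Fin n) ℤ) (i : Fin n) : K2A.c F A i 1 1 = 1 :=
  presAbelHom_rel (rels := K2ARels F A) (Or.inr (Or.inl ⟨i, rfl⟩))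

theorem cL3 (A : Matrix (Fin n) (Fin n) ℤ) (i : Fin n) (u v : Fˣ) :
    K2A.c F A i u v = K2A.c F A i u⁻¹ v⁻¹ := by
  have h := presAbelHom_rel (rels := K2ARels F A) (Or.inr (Or.inr (Or.inl ⟨i, u, v, rfl⟩)))
  rw [map_mul, map_inv, mul_inv_eq_one] at h
  exact h

theorem cL4 (A : Matrix (Fin n) (Fin n) ℤ) (i : Fin n) (u w v : Fˣ)
    (hw : (w : F) = 1 - (u : F)) : K2A.c F A i u v = K2A.c F A i u (w * v) := by
  have h := presAbelHom_rel (rels := K2ARels F A)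
    (Or.inr (Or.inr (Or.inr (Or.inl ⟨i, u, v, w, hw, rfl⟩))))
  rw [map_mul, map_inv, mul_inv_eq_one] at h
  exact h

theorem cL5 (A : Matrix (Fin n) (Fin n) ℤ) {i j : Fin n} (hij : i ≠ j) (u v : Fˣ) :
    K2A.c F A i u (v ^ (A j i)) = K2A.c F A j (u ^ (A i j)) v := by
  have h := presAbelHom_rel (rels := K2ARels F A)
    (Or.inr (Or.inr (Or.inr (Or.inr (Or.inl ⟨i, j, u, v, hij, rfl⟩)))))
  rw [map_mul, map_inv, mul_inv_eq_one] at h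
  exact h

theorem cL6 (A : Matrix (Fin n) (Fin n) ℤ) {i j : Fin n} (hij : i ≠ j) (t u v : Fˣ) :
    K2A.c F A i (t*u) (v ^ (A j i)) =
      K2A.c F A i t (v ^ (A j i)) * K2A.c F A i u (v ^ (A j i)) := by
  have h := presAbelHom_rel (rels := K2ARels F A)
    (Or.inr (Or.inr (Or.inr (Or.inr (Or.inr (Or.inl ⟨i, j, t, u, v, hij, rfl⟩))))))
  rw [map_mul, map_inv, mul_inv_eq_one, map_mul] at h
  exact h

/-- Each `c_i` is a Steinberg cocycle. -/
noncomputable def scA (A : Matrix (Fin n) (Fin n) ℤ) (i : Fin n) : SC F (K2A F A) where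
  c := fun u v => K2A.c F A i u v
  hc := fun t u v => cL1 F A i t u v
  hone := cL2 F A i
  hinv := fun u v => cL3 F A i u v
  hst := fun u w v h => cL4 F A i u w v h

/-- If column `i` contains an odd entry `A j i` then `c_i` is bimultiplicative. -/
theorem cA_mul_left (A : Matrix (Fin n) (Fin n) ℤ) {i j : Fin n} (hij : i ≠ j)
    (hodd : Odd (A j i)) (t u v : Fˣ) :
    K2A.c F A i (t*u) v = K2A.c F A i t v * K2A.c F A i u v :=
  (scA F A i).mul_left hodd (fun x y w => cL6 F A hij x y w) t u v

theorem cA_mul_right (A : Matrix (Fin n) (Fin n) ℤ) {i j : Fin n} (hij : i ≠ j)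
    (hodd : Odd (A j i)) (t u v : Fˣ) :
    K2A.c F A i t (u*v) = K2A.c F A i t u * K2A.c F A i t v :=
  (scA F A i).mul_right hodd (fun x y w => cL6 F A hij x y w) t u v

theorem cA_st (A : Matrix (Fin n) (Fin n) ℤ) (i : Fin n) (u w : Fˣ)
    (hw : (w : F) = 1 - (u : F)) : K2A.c F A i u w = 1 :=
  (scA F A i).steinberg u w hw

end CAPI

section Matrix2

variable (a b : ℤ)

theorem AM01 : (!![2, -b; -a, 2] : Matrix (Fin 2) (Fin 2) ℤ) 0 1 = -b := by
  simp [Matrix.cons_val_zero, Matrix.cons_val_one, Matrix.head_cons]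

theorem AM10 : (!![2, -b; -a, 2] : Matrix (Fin 2) (Fin 2) ℤ) 1 0 = -a := by
  simp [Matrix.cons_val_zero, Matrix.cons_val_one, Matrix.head_cons]

end Matrix2


section Maps

@[simp] theorem prod_fst_zpow {G H : Type*} [Group G] [Group H] (p : G × H) (n : ℤ) :
    (p ^ n).1 = p.1 ^ n := rfl

@[simp] theorem prod_snd_zpow {G H : Type*} [Group G] [Group H] (p : G × H) (n : ℤ) :
    (p ^ n).2 = p.2 ^ n := rfl

theorem prod_hom_ext {G H P : Type*} [CommGroup G] [CommGroup H] [CommGroup P]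
    {f g : G × H →* P} (h1 : f.comp (MonoidHom.inl G H) = g.comp (MonoidHom.inl G H))
    (h2 : f.comp (MonoidHom.inr G H) = g.comp (MonoidHom.inr G H)) : f = g := by
  ext x
  have hx : x = (x.1, 1) * (1, x.2) := by
    cases x; simp
  rw [hx, map_mul, map_mul]
  exact congrArg₂ (· * ·) (DFunLike.congr_fun h1 x.1) (DFunLike.congr_fun h2 x.2)

variable (a b : ℤ)

/-- Build a homomorphism out of `K₂(A,F)` from a homomorphism `θ` out of `K₂(F)`
and exponents `e0, e1` satisfying the compatibility relation. -/
noncomputable def mkPhi {N : Type} [CommGroup N] (θ : K2 F →* N) (e0 e1 : ℤ)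
    (hcomp : ∀ u v : Fˣ, θ (K2.sym F u v ^ (-a * e0)) = θ (K2.sym F u v ^ (-b * e1))) :
    K2A F !![2, -b; -a, 2] →* N :=
  presAbelLift (fun x => θ (K2.sym F x.2.1 x.2.2 ^ (![e0, e1] x.1))) (by
    rintro r (⟨i,t,u,v,rfl⟩ | ⟨i,rfl⟩ | ⟨i,u,v,rfl⟩ | ⟨i,u,v,w,hw,rfl⟩ |
      ⟨i,j,u,v,hij,rfl⟩ | ⟨i,j,t,u,v,hij,rfl⟩ | ⟨i,j,t,u,v,hij,rfl⟩) <;>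
      simp only [map_mul, map_inv, FreeGroup.lift_apply_of, mul_inv_eq_one]
    · rw [← map_mul, ← map_mul, ← mul_zpow, ← mul_zpow, sym_cocycle]
    · rw [sym_one_left, one_zpow, map_one]
    · rw [← sym_inv_inv]
    · rw [sym_mul_right, sym_st F u w hw, one_mul]
    · fin_cases i <;> fin_cases j
      · exact absurd rfl hij
      · rw [sym_zpow_right, sym_zpow_left, ← zpow_mul, ← zpow_mul]
        simp only [Matrix.cons_val_zero, Matrix.cons_val_one, Matrix.head_cons,
          Matrix.cons_val', Matrix.empty_val', Matrix.cons_val_fin_one, Matrix.head_fin_const]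
        exact hcomp u v
      · rw [sym_zpow_right, sym_zpow_left, ← zpow_mul, ← zpow_mul]
        simp only [Matrix.cons_val_zero, Matrix.cons_val_one, Matrix.head_cons,
          Matrix.cons_val', Matrix.empty_val', Matrix.cons_val_fin_one, Matrix.head_fin_const]
        exact (hcomp u v).symm
      · exact absurd rfl hij
    · rw [← map_mul, ← mul_zpow, sym_mul_left]
    · rw [← map_mul, ← mul_zpow, sym_mul_right])

theorem mkPhi_c {N : Type} [CommGroup N] (θ : K2 F →* N) (e0 e1 : ℤ)
    (hcomp : ∀ u v : Fˣ, θ (K2.sym F u v ^ (-a * e0)) = θ (K2.sym F u v ^ (-b * e1)))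
    (i : Fin 2) (u v : Fˣ) :
    mkPhi F a b θ e0 e1 hcomp (K2A.c F !![2, -b; -a, 2] i u v) =
      θ (K2.sym F u v ^ (![e0, e1] i)) :=
  presAbelLift_of _ _ (i, u, v)

theorem pi_zpow_eq (g : ℕ) (x : K2 F) (m n' t : ℤ) (hmn : m = n' + t * g) :
    QuotientGroup.mk' (K2.powSubgroup F g) (x ^ m) =
      QuotientGroup.mk' (K2.powSubgroup F g) (x ^ n') := by
  have h1 : ((x ^ t) ^ (g : ℕ)) ∈ K2.powSubgroup F g :=
    Subgroup.subset_closure ⟨x ^ t, rfl⟩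
  have h2 : QuotientGroup.mk' (K2.powSubgroup F g) ((x ^ t) ^ (g : ℕ)) = 1 :=
    (QuotientGroup.eq_one_iff _).mpr h1
  rw [hmn, zpow_add, zpow_mul, zpow_natCast, map_mul, h2, mul_one]

/-- Build a homomorphism out of `K₂(F)` from a bimultiplicative Steinberg symbol. -/
noncomputable def liftSym {N : Type} [CommGroup N] (f : Fˣ → Fˣ → N)
    (hl : ∀ t u v, f (t*u) v = f t v * f u v)
    (hr : ∀ t u v, f t (u*v) = f t u * f t v)
    (hst : ∀ (u w : Fˣ), (w : F) = 1 - (u : F) → f u w = 1) : K2 F →* N :=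
  presAbelLift (fun x => f x.1 x.2) (by
    rintro r (⟨t,u,v,rfl⟩ | ⟨t,u,v,rfl⟩ | ⟨u,w,hw,rfl⟩) <;>
      simp only [map_mul, map_inv, FreeGroup.lift_apply_of, mul_inv_eq_one]
    · exact hl t u v
    · exact hr t u v
    · exact hst u w hw)

theorem liftSym_sym {N : Type} [CommGroup N] (f : Fˣ → Fˣ → N)
    (hl : ∀ t u v, f (t*u) v = f t v * f u v)
    (hr : ∀ t u v, f t (u*v) = f t u * f t v)
    (hst : ∀ (u w : Fˣ), (w : F) = 1 - (u : F) → f u w = 1) (u v : Fˣ) :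
    liftSym F f hl hr hst (K2.sym F u v) = f u v :=
  presAbelLift_of _ _ (u, v)

end Maps

/-- For positive odd integers `a, b` and the GCM with rows `(2,-b)`, `(-a,2)`,
`K₂(A,F) ≅ (K₂(F)/hK₂(F)) × K₂(F)` where `h = gcd(a,b)`. -/
theorem K2A_rank2_odd_odd (a b : ℤ) (ha : 0 < a) (hb : 0 < b)
    (hao : Odd a) (hbo : Odd b) (F : Type) [Field F] :
    Nonempty (K2A F !![2, -b; -a, 2] ≃*
      ((K2 F ⧸ K2.powSubgroup F (Int.gcd a b)) × K2 F)) := by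
  classical
  set g : ℕ := Int.gcd a b with hgdef
  have hgpos : 0 < Int.gcd a b := Int.gcd_pos_iff.mpr (Or.inl ha.ne')
  have haa : (g:ℤ) * (a / (g:ℤ)) = a := Int.mul_ediv_cancel' (Int.gcd_dvd_left a b)
  have hbb : (g:ℤ) * (b / (g:ℤ)) = b := Int.mul_ediv_cancel' (Int.gcd_dvd_right a b)
  set a' : ℤ := a / (g:ℤ) with ha'def
  set b' : ℤ := b / (g:ℤ) with hb'def
  have hcop : Int.gcd a' b' = 1 := Int.gcd_div_gcd_div_gcd hgpos
  obtain ⟨p, q, hpq⟩ := Int.isCoprime_iff_gcd_eq_one.mpr hcop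
  have habg : a * p + b * q = (g:ℤ) := by
    linear_combination (-p) * haa + (-q) * hbb + (g:ℤ) * hpq
  have hab : a * b' = b * a' := by
    linear_combination (-b') * haa + a' * hbb
  -- the forward homomorphism
  let π := QuotientGroup.mk' (K2.powSubgroup F g)
  have hcomp1 : ∀ u v : Fˣ, π (K2.sym F u v ^ (-a * p)) = π (K2.sym F u v ^ (-b * -q)) :=
    fun u v => pi_zpow_eq F g _ _ _ (-1) (by linear_combination (-1 : ℤ) * habg)
  have hcomp2 : ∀ u v : Fˣ, (MonoidHom.id (K2 F)) (K2.sym F u v ^ (-a * b')) =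
      (MonoidHom.id (K2 F)) (K2.sym F u v ^ (-b * a')) := fun u v => by
    rw [show -a * b' = -b * a' by linear_combination (-1 : ℤ) * hab]
  let P1 := mkPhi F a b π p (-q) hcomp1
  let P2 := mkPhi F a b (MonoidHom.id (K2 F)) b' a' hcomp2
  let Phi := P1.prod P2
  have hPhi0 : ∀ u v : Fˣ, Phi (K2A.c F !![2,-b;-a,2] 0 u v) =
      (π (K2.sym F u v ^ p), K2.sym F u v ^ b') := by
    intro u v
    show (P1 _, P2 _) = _
    rw [mkPhi_c, mkPhi_c]
    simp only [Matrix.cons_val_zero, MonoidHom.id_apply]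
  have hPhi1 : ∀ u v : Fˣ, Phi (K2A.c F !![2,-b;-a,2] 1 u v) =
      (π (K2.sym F u v ^ (-q)), K2.sym F u v ^ a') := by
    intro u v
    show (P1 _, P2 _) = _
    rw [mkPhi_c, mkPhi_c]
    simp only [Matrix.cons_val_one, Matrix.head_cons, Matrix.cons_val_zero, MonoidHom.id_apply]
  -- the backward homomorphism
  have h01 : (0 : Fin 2) ≠ 1 := by decide
  have h10 : (1 : Fin 2) ≠ 0 := by decide
  have hodd0 : Odd ((!![2,-b;-a,2] : Matrix (Fin 2) (Fin 2) ℤ) 1 0) := by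
    rw [AM10]; exact hao.neg
  have hodd1 : Odd ((!![2,-b;-a,2] : Matrix (Fin 2) (Fin 2) ℤ) 0 1) := by
    rw [AM01]; exact hbo.neg
  have hl0 : ∀ t u v : Fˣ, K2A.c F !![2,-b;-a,2] 0 (t*u) v =
      K2A.c F _ 0 t v * K2A.c F _ 0 u v := fun t u v => cA_mul_left F _ h01 hodd0 t u v
  have hr0 : ∀ t u v : Fˣ, K2A.c F !![2,-b;-a,2] 0 t (u*v) =
      K2A.c F _ 0 t u * K2A.c F _ 0 t v := fun t u v => cA_mul_right F _ h01 hodd0 t u v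
  have hl1 : ∀ t u v : Fˣ, K2A.c F !![2,-b;-a,2] 1 (t*u) v =
      K2A.c F _ 1 t v * K2A.c F _ 1 u v := fun t u v => cA_mul_left F _ h10 hodd1 t u v
  have hr1 : ∀ t u v : Fˣ, K2A.c F !![2,-b;-a,2] 1 t (u*v) =
      K2A.c F _ 1 t u * K2A.c F _ 1 t v := fun t u v => cA_mul_right F _ h10 hodd1 t u v
  let F1 : K2 F →* K2A F !![2,-b;-a,2] :=
    liftSym F (fun u v => K2A.c F _ 0 u v) hl0 hr0 (fun u w hw => cA_st F _ 0 u w hw)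
  let F2 : K2 F →* K2A F !![2,-b;-a,2] :=
    liftSym F (fun u v => K2A.c F _ 1 u v) hl1 hr1 (fun u w hw => cA_st F _ 1 u w hw)
  have hF1 : ∀ u v : Fˣ, F1 (K2.sym F u v) = K2A.c F !![2,-b;-a,2] 0 u v :=
    fun u v => liftSym_sym F _ _ _ _ u v
  have hF2 : ∀ u v : Fˣ, F2 (K2.sym F u v) = K2A.c F !![2,-b;-a,2] 1 u v :=
    fun u v => liftSym_sym F _ _ _ _ u v
  have hkeyhom : (zpowGroupHom (α := K2A F !![2,-b;-a,2]) a).comp F1 =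
      (zpowGroupHom (α := K2A F !![2,-b;-a,2]) b).comp F2 := by
    apply presAbel_hom_ext
    rintro ⟨u, v⟩
    show (F1 (K2.sym F u v)) ^ a = (F2 (K2.sym F u v)) ^ b
    rw [hF1, hF2]
    have h5 := cL5 F !![2,-b;-a,2] h10 u v
    rw [AM01, AM10] at h5
    rw [zpow_right_of_mul hr1 u v (-b), zpow_left_of_mul hl0 u v (-a)] at h5
    rw [zpow_neg, zpow_neg] at h5
    exact (inv_inj.mp h5).symm
  have hkey : ∀ y, F1 y ^ a = F2 y ^ b := fun y => DFunLike.congr_fun hkeyhom y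
  let g0 : K2 F →* K2A F !![2,-b;-a,2] :=
    MonoidHom.mk' (fun y => F1 y ^ a' * F2 y ^ (-b')) (by
      intro x y
      rw [map_mul, map_mul, mul_zpow, mul_zpow, mul_mul_mul_comm])
  let psi2 : K2 F →* K2A F !![2,-b;-a,2] :=
    MonoidHom.mk' (fun y => F1 y ^ q * F2 y ^ p) (by
      intro x y
      rw [map_mul, map_mul, mul_zpow, mul_zpow, mul_mul_mul_comm])
  have hker : K2.powSubgroup F g ≤ g0.ker := by
    show Subgroup.closure {x : K2 F | ∃ y, x = y ^ g} ≤ g0.ker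
    refine (Subgroup.closure_le _).mpr ?_
    rintro x ⟨y, rfl⟩
    simp only [SetLike.mem_coe, MonoidHom.mem_ker]
    have e1 : g0 (y ^ (g : ℕ)) = (F1 y) ^ ((g:ℤ) * a') * (F2 y) ^ ((g:ℤ) * (-b')) := by
      show F1 (y ^ (g:ℕ)) ^ a' * F2 (y ^ (g:ℕ)) ^ (-b') = _
      rw [map_pow, map_pow, ← zpow_natCast (F1 y) g, ← zpow_natCast (F2 y) g,
        ← zpow_mul, ← zpow_mul]
    rw [e1, haa, show (g:ℤ) * (-b') = -b by linear_combination (-1 : ℤ) * hbb]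
    rw [hkey y, ← zpow_add]
    simp
  let psi1 := QuotientGroup.lift (K2.powSubgroup F g) g0 hker
  let Psi := psi1.coprod psi2
  have hpsi1 : ∀ x : K2 F, psi1 (π x) = g0 x := fun x => rfl
  -- Psi ∘ Phi = id
  have E1 : Psi.comp Phi = MonoidHom.id (K2A F !![2,-b;-a,2]) := by
    apply presAbel_hom_ext
    rintro ⟨i, u, v⟩
    show Psi (Phi (K2A.c F !![2,-b;-a,2] i u v)) = K2A.c F !![2,-b;-a,2] i u v
    have hi2 : i = 0 ∨ i = 1 := by
      obtain ⟨iv, hiv⟩ := i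
      interval_cases iv
      · exact Or.inl rfl
      · exact Or.inr rfl
    rcases hi2 with rfl | rfl
    · rw [hPhi0]
      show psi1 (π (K2.sym F u v ^ p)) * psi2 (K2.sym F u v ^ b') = _
      rw [hpsi1, map_zpow, map_zpow]
      show (F1 (K2.sym F u v) ^ a' * F2 (K2.sym F u v) ^ (-b')) ^ p *
        (F1 (K2.sym F u v) ^ q * F2 (K2.sym F u v) ^ p) ^ b' = _
      rw [mul_zpow, mul_zpow, ← zpow_mul, ← zpow_mul, ← zpow_mul, ← zpow_mul,
        mul_mul_mul_comm, ← zpow_add, ← zpow_add,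
        show a' * p + q * b' = 1 by linear_combination hpq,
        show -b' * p + p * b' = 0 by ring, zpow_one, zpow_zero, mul_one]
      exact hF1 u v
    · rw [hPhi1]
      show psi1 (π (K2.sym F u v ^ (-q))) * psi2 (K2.sym F u v ^ a') = _
      rw [hpsi1, map_zpow, map_zpow]
      show (F1 (K2.sym F u v) ^ a' * F2 (K2.sym F u v) ^ (-b')) ^ (-q) *
        (F1 (K2.sym F u v) ^ q * F2 (K2.sym F u v) ^ p) ^ a' = _
      rw [mul_zpow, mul_zpow, ← zpow_mul, ← zpow_mul, ← zpow_mul, ← zpow_mul,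
        mul_mul_mul_comm, ← zpow_add, ← zpow_add,
        show a' * -q + q * a' = 0 by ring,
        show -b' * -q + p * a' = 1 by linear_combination hpq, zpow_one, zpow_zero, one_mul]
      exact hF2 u v
  -- Phi ∘ Psi = id
  have E2 : Phi.comp Psi = MonoidHom.id _ := by
    apply prod_hom_ext
    · apply QuotientGroup.monoidHom_ext
      apply presAbel_hom_ext
      rintro ⟨u, v⟩
      show Phi (Psi (π (K2.sym F u v), 1)) = (π (K2.sym F u v), 1)
      have e1 : Psi (π (K2.sym F u v), 1) = g0 (K2.sym F u v) := by
        show psi1 (π (K2.sym F u v)) * psi2 1 = _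
        rw [map_one, mul_one, hpsi1]
      rw [e1]
      show Phi (F1 (K2.sym F u v) ^ a' * F2 (K2.sym F u v) ^ (-b')) = _
      rw [map_mul, map_zpow, map_zpow, hF1, hF2, hPhi0, hPhi1]
      refine Prod.ext ?_ ?_
      · show (π (K2.sym F u v ^ p)) ^ a' * (π (K2.sym F u v ^ (-q))) ^ (-b') = π (K2.sym F u v)
        rw [← map_zpow, ← map_zpow, ← map_mul, ← zpow_mul, ← zpow_mul, ← zpow_add,
          show p * a' + -q * -b' = 1 by linear_combination hpq, zpow_one]
      · show (K2.sym F u v ^ b') ^ a' * (K2.sym F u v ^ a') ^ (-b') = 1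
        rw [← zpow_mul, ← zpow_mul, ← zpow_add, show b' * a' + a' * -b' = 0 by ring, zpow_zero]
    · apply presAbel_hom_ext
      rintro ⟨u, v⟩
      show Phi (Psi (1, K2.sym F u v)) = (1, K2.sym F u v)
      have e1 : Psi (1, K2.sym F u v) = F1 (K2.sym F u v) ^ q * F2 (K2.sym F u v) ^ p := by
        show psi1 1 * psi2 (K2.sym F u v) = _
        rw [map_one, one_mul]
        rfl
      rw [e1, map_mul, map_zpow, map_zpow, hF1, hF2, hPhi0, hPhi1]
      refine Prod.ext ?_ ?_
      · show (π (K2.sym F u v ^ p)) ^ q * (π (K2.sym F u v ^ (-q))) ^ p = 1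
        rw [← map_zpow, ← map_zpow, ← map_mul, ← zpow_mul, ← zpow_mul, ← zpow_add,
          show p * q + -q * p = 0 by ring, zpow_zero, map_one]
      · show (K2.sym F u v ^ b') ^ q * (K2.sym F u v ^ a') ^ p = K2.sym F u v
        rw [← zpow_mul, ← zpow_mul, ← zpow_add,
          show b' * q + a' * p = 1 by linear_combination hpq, zpow_one]
  exact ⟨MonoidHom.toMulEquiv Phi Psi E1 E2⟩
end
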